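/- Let X ⊆ ℝ² be compact, V a one-dimensional subspace, and s > 0. Suppose ∫ H^s_∞(X ∩ proj_V^{-1}(t)) dλ(t) = ∫ H^s(X ∩ proj_V^{-1}(t)) dλ(t) < ∞. Then for every Borel subset B ⊆ X, ∫ H^s_∞(B ∩ proj_V^{-1}(t)) dλ(t) = ∫ H^s(B ∩ proj_V^{-1}(t)) dλ(t); in particular H^s_∞(B ∩ proj_V^{-1}(t)) = H^s(B ∩ proj_V^{-1}(t)) for λ-almost every t. -/

import Mathlib

open MeasureTheory Set
open scoped ENNReal RealInnerProductSpace

noncomputable section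

abbrev E2 := EuclideanSpace ℝ (Fin 2)

/-- The `s`-dimensional Hausdorff content. -/
noncomputable def hausdorffContent (s : ℝ) (A : Set E2) : ℝ≥0∞ :=
  ⨅ (U : ℕ → Set E2) (_ : A ⊆ ⋃ n, U n), ∑' n, EMetric.diam (U n) ^ s

open scoped NNReal

/-- Infimum over countable covers by open sets of diameter `< δ`. -/
noncomputable def ocAux (s : ℝ) (δ : ℝ≥0∞) (A : Set E2) : ℝ≥0∞ :=
  ⨅ (U : ℕ → Set E2) (_ : A ⊆ ⋃ n, U n)
    (_ : ∀ n, IsOpen (U n) ∧ EMetric.diam (U n) < δ), ∑' n, EMetric.diam (U n) ^ s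

lemma summand_eq {s : ℝ} (hs : 0 < s) (U : Set E2) :
    (⨆ _ : U.Nonempty, EMetric.diam U ^ s) = EMetric.diam U ^ s := by
  rcases eq_empty_or_nonempty U with h | h
  · simp [h, EMetric.diam, ENNReal.zero_rpow_of_pos hs]
  · simp [h]

lemma content_eq_ofFunction (s : ℝ) (hs : 0 < s) :
    hausdorffContent s = ⇑(OuterMeasure.ofFunction (fun U : Set E2 => EMetric.diam U ^ s)
      (by simp [EMetric.diam, ENNReal.zero_rpow_of_pos hs])) := by
  funext A
  rw [OuterMeasure.ofFunction_apply]
  rfl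

lemma content_mono {s : ℝ} (hs : 0 < s) {A B : Set E2} (h : A ⊆ B) :
    hausdorffContent s A ≤ hausdorffContent s B := by
  rw [content_eq_ofFunction s hs]
  exact measure_mono h

lemma content_union_le {s : ℝ} (hs : 0 < s) (A B : Set E2) :
    hausdorffContent s (A ∪ B) ≤ hausdorffContent s A + hausdorffContent s B := by
  rw [content_eq_ofFunction s hs]
  exact measure_union_le A B

lemma content_le_hausdorff {s : ℝ} (hs : 0 < s) (A : Set E2) :
    hausdorffContent s A ≤ μH[s] A := by
  rw [MeasureTheory.Measure.hausdorffMeasure_apply]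
  refine le_trans ?_ (le_iSup₂ (α := ℝ≥0∞) 1 one_pos)
  refine le_iInf fun U => le_iInf fun hU => le_iInf fun _ => ?_
  calc hausdorffContent s A ≤ ∑' n, EMetric.diam (U n) ^ s := iInf₂_le U hU
  _ = ∑' n, ⨆ _ : (U n).Nonempty, EMetric.diam (U n) ^ s := by
      simp [summand_eq hs]

lemma helper1 (a : ℝ≥0∞) (ha : 0 < a) : ∃ t : ℝ≥0, 0 < t ∧ 2 * (t : ℝ≥0∞) ≤ a := by
  rcases eq_or_ne a ⊤ with rfl | hne
  · exact ⟨1, one_pos, le_top⟩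
  · lift a to ℝ≥0 using hne
    refine ⟨a / 4, ?_, ?_⟩
    · have : (0 : ℝ≥0) < a := by exact_mod_cast ha
      positivity
    · rw [← ENNReal.coe_ofNat, ← ENNReal.coe_mul, ENNReal.coe_le_coe]
      rw [show (2 : ℝ≥0) * (a / 4) = a / 2 from NNReal.coe_injective (by push_cast; ring)]
      exact half_le_self (by positivity)

lemma helper2 {s : ℝ} (hs : 0 < s) (d δ ε : ℝ≥0∞) (hd : d ≠ ⊤) (hdδ : d < δ) (hε : 0 < ε) :
    ∃ a : ℝ≥0∞, 0 < a ∧ (d + a) ^ s ≤ d ^ s + ε ∧ d + a < δ := by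
  have h1 : Filter.Tendsto (fun x : ℝ≥0∞ => d + x) (nhds 0) (nhds d) := by
    simpa using (continuous_add_left d).tendsto 0
  have h2 : Filter.Tendsto (fun x : ℝ≥0∞ => (d + x) ^ s) (nhds 0) (nhds (d ^ s)) :=
    (ENNReal.continuous_rpow_const.tendsto d).comp h1
  have hds : d ^ s < d ^ s + ε := by
    refine ENNReal.lt_add_right ?_ hε.ne'
    exact ENNReal.rpow_ne_top_of_nonneg hs.le hd
  have e1 : ∀ᶠ x : ℝ≥0∞ in nhds 0, (d + x) ^ s ≤ d ^ s + ε :=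
    (h2.eventually_lt_const hds).mono fun x hx => hx.le
  have e2 : ∀ᶠ x : ℝ≥0∞ in nhds 0, d + x < δ := h1.eventually_lt_const hdδ
  obtain ⟨b, hb, hball⟩ := (ENNReal.nhds_zero_basis.eventually_iff).mp (e1.and e2)
  obtain ⟨a, ha0, hab⟩ := exists_between hb
  exact ⟨a, ha0, (hball hab).1, (hball hab).2⟩

lemma fatten {s : ℝ} (hs : 0 < s) {δ : ℝ≥0∞} (A : Set E2) (U : ℕ → Set E2)
    (hU : A ⊆ ⋃ n, U n) (hd : ∀ n, EMetric.diam (U n) < δ) :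
    ocAux s δ A ≤ ∑' n, EMetric.diam (U n) ^ s := by
  refine ENNReal.le_of_forall_pos_le_add fun ε hε hT => ?_
  obtain ⟨ε', hε'pos, hε'sum⟩ :=
    ENNReal.exists_pos_sum_of_countable' (ε := (ε : ℝ≥0∞)) (by exact_mod_cast hε.ne') ℕ
  have hdne : ∀ n, EMetric.diam (U n) ≠ ⊤ := by
    intro n h
    have := ENNReal.le_tsum (f := fun n => EMetric.diam (U n) ^ s) n
    rw [h, ENNReal.top_rpow_of_pos hs] at this
    exact (hT.trans_le this).false
  have key : ∀ n, ∃ a : ℝ≥0∞, 0 < a ∧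
      (EMetric.diam (U n) + a) ^ s ≤ EMetric.diam (U n) ^ s + ε' n ∧
        EMetric.diam (U n) + a < δ :=
    fun n => helper2 hs _ _ _ (hdne n) (hd n) (hε'pos n)
  choose a ha0 harpow haδ using key
  have key2 : ∀ n, ∃ t : ℝ≥0, 0 < t ∧ 2 * (t : ℝ≥0∞) ≤ a n := fun n => helper1 _ (ha0 n)
  choose t ht0 hta using key2
  set V : ℕ → Set E2 := fun n => Metric.thickening (t n) (U n) with hV
  have hVdiam : ∀ n, EMetric.diam (V n) ≤ EMetric.diam (U n) + a n := fun n =>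
    (Metric.ediam_thickening_le (t n)).trans (add_le_add le_rfl (hta n))
  have hVsub : A ⊆ ⋃ n, V n :=
    hU.trans (Set.iUnion_mono fun n => Metric.self_subset_thickening (ht0 n) _)
  have hVprop : ∀ n, IsOpen (V n) ∧ EMetric.diam (V n) < δ := fun n =>
    ⟨Metric.isOpen_thickening, (hVdiam n).trans_lt (haδ n)⟩
  calc ocAux s δ A ≤ ∑' n, EMetric.diam (V n) ^ s := by
        exact le_trans (iInf_le _ V) (le_trans (iInf_le _ hVsub) (iInf_le _ hVprop))
    _ ≤ ∑' n, (EMetric.diam (U n) ^ s + ε' n) := by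
        refine ENNReal.tsum_le_tsum fun n => ?_
        exact le_trans (ENNReal.rpow_le_rpow (hVdiam n) hs.le) (harpow n)
    _ = (∑' n, EMetric.diam (U n) ^ s) + ∑' n, ε' n := ENNReal.tsum_add
    _ ≤ (∑' n, EMetric.diam (U n) ^ s) + ε := add_le_add le_rfl hε'sum.le

lemma ocAux_top_eq_content {s : ℝ} (hs : 0 < s) (A : Set E2) :
    ocAux s ⊤ A = hausdorffContent s A := by
  refine le_antisymm ?_ ?_
  · refine le_iInf fun U => le_iInf fun hU => ?_
    rcases eq_or_ne (∑' n, EMetric.diam (U n) ^ s) ⊤ with h | h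
    · rw [h]; exact le_top
    · refine fatten hs A U hU fun n => ?_
      rw [lt_top_iff_ne_top]
      intro hdn
      apply h
      have h1 : EMetric.diam (U n) ^ s ≤ ∑' n, EMetric.diam (U n) ^ s :=
        ENNReal.le_tsum n
      rw [hdn, ENNReal.top_rpow_of_pos hs] at h1
      exact top_le_iff.mp h1
  · exact le_iInf fun U => le_iInf fun hU => le_iInf fun _ => iInf₂_le U hU

lemma iSup_ocAux_eq_hausdorff {s : ℝ} (hs : 0 < s) (A : Set E2) :
    (⨆ n : ℕ, ocAux s ((n + 1 : ℕ) : ℝ≥0∞)⁻¹ A) = μH[s] A := by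
  rw [MeasureTheory.Measure.hausdorffMeasure_apply]
  refine le_antisymm ?_ ?_
  · refine iSup_le fun n => ?_
    refine le_trans ?_ (le_iSup₂ (α := ℝ≥0∞) (((n + 2 : ℕ) : ℝ≥0∞)⁻¹)
      (by simp [ENNReal.inv_pos]))
    refine le_iInf fun U => le_iInf fun hU => le_iInf fun hd => ?_
    have hd' : ∀ m, EMetric.diam (U m) < ((n + 1 : ℕ) : ℝ≥0∞)⁻¹ := by
      intro m
      refine (hd m).trans_lt ?_
      rw [ENNReal.inv_lt_inv]
      exact_mod_cast Nat.lt_succ_self (n + 1)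
    calc ocAux s ((n + 1 : ℕ) : ℝ≥0∞)⁻¹ A ≤ ∑' m, EMetric.diam (U m) ^ s :=
          fatten hs A U hU hd'
      _ = ∑' m, ⨆ _ : (U m).Nonempty, EMetric.diam (U m) ^ s := by simp [summand_eq hs]
  · refine iSup_le fun r => iSup_le fun hr => ?_
    obtain ⟨n, hn⟩ : ∃ n : ℕ, ((n + 1 : ℕ) : ℝ≥0∞)⁻¹ ≤ r := by
      rcases eq_or_ne r ⊤ with rfl | hrt
      · exact ⟨0, le_top⟩
      · obtain ⟨n, hn⟩ := ENNReal.exists_inv_nat_lt hr.ne'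
        exact ⟨n, le_trans (by
          rw [ENNReal.inv_le_inv]
          exact_mod_cast Nat.le_succ n) hn.le⟩
    refine le_trans ?_ (le_iSup _ n)
    refine le_iInf fun U => le_iInf fun hU => le_iInf fun hprop => ?_
    refine le_trans (iInf₂_le U hU)
      (le_trans (iInf_le _ fun m => ((hprop m).2.le.trans hn)) ?_)
    refine le_of_eq (tsum_congr fun m => ?_); exact summand_eq hs (U m)

lemma slice_closed (v : E2) (t : ℝ) : IsClosed {x : E2 | ⟪v, x⟫ = t} :=
  isClosed_eq (continuous_const.inner continuous_id) continuous_const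

lemma usc_ocAux {s : ℝ} (hs : 0 < s) {δ : ℝ≥0∞} (hδ : 0 < δ) {X : Set E2}
    (hX : IsCompact X) (v : E2) :
    UpperSemicontinuous fun t : ℝ => ocAux s δ (X ∩ {x | ⟪v, x⟫ = t}) := by
  intro t c hc
  simp only [ocAux, iInf_lt_iff] at hc
  obtain ⟨U, hcov, hprop, hsum⟩ := hc
  have hKcomp : IsCompact (X ∩ {x : E2 | ⟪v, x⟫ = t}) :=
    hX.inter_right (slice_closed v t)
  obtain ⟨F, hF⟩ := hKcomp.elim_finite_subcover U (fun n => (hprop n).1) hcov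
  set G : Set E2 := ⋃ n ∈ F, U n with hG
  have hGopen : IsOpen G := isOpen_biUnion fun n _ => (hprop n).1
  have hK' : IsCompact ((fun x : E2 => ⟪v, x⟫) '' (X \ G)) :=
    (hX.diff hGopen).image (continuous_const.inner continuous_id)
  have ht : t ∉ (fun x : E2 => ⟪v, x⟫) '' (X \ G) := by
    rintro ⟨x, ⟨hxX, hxG⟩, rfl⟩
    exact hxG (hF ⟨hxX, rfl⟩)
  have hev : ∀ᶠ t' : ℝ in nhds t, t' ∉ (fun x : E2 => ⟪v, x⟫) '' (X \ G) :=
    hK'.isClosed.isOpen_compl.eventually_mem ht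
  filter_upwards [hev] with t' ht'
  have hsub : X ∩ {x : E2 | ⟪v, x⟫ = t'} ⊆ G := by
    rintro x ⟨hxX, hxt⟩
    by_contra hxG
    exact ht' ⟨x, ⟨hxX, hxG⟩, hxt⟩
  set W : ℕ → Set E2 := fun n => if n ∈ F then U n else ∅ with hW
  have hWcov : X ∩ {x : E2 | ⟪v, x⟫ = t'} ⊆ ⋃ n, W n := by
    refine hsub.trans ?_
    intro x hx
    obtain ⟨n, hnF, hxn⟩ := mem_iUnion₂.mp hx
    exact mem_iUnion.mpr ⟨n, by simp only [hW, if_pos hnF]; exact hxn⟩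
  have hWprop : ∀ n, IsOpen (W n) ∧ EMetric.diam (W n) < δ := by
    intro n
    by_cases hn : n ∈ F <;> simp [hW, hn, EMetric.diam, (hprop n).1, (show Metric.ediam (U n) < δ from (hprop n).2), hδ]
  have hWsum : (∑' n, EMetric.diam (W n) ^ s) ≤ ∑' n, EMetric.diam (U n) ^ s := by
    refine ENNReal.tsum_le_tsum fun n => ?_
    by_cases hn : n ∈ F
    · simp [hW, hn]
    · simp [hW, hn, EMetric.diam, ENNReal.zero_rpow_of_pos hs]
  calc ocAux s δ (X ∩ {x | ⟪v, x⟫ = t'}) ≤ ∑' n, EMetric.diam (W n) ^ s := by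
        exact le_trans (iInf_le _ W) (le_trans (iInf_le _ hWcov) (iInf_le _ hWprop))
    _ ≤ ∑' n, EMetric.diam (U n) ^ s := hWsum
    _ < c := hsum

lemma meas_ocAux {s : ℝ} (hs : 0 < s) {δ : ℝ≥0∞} (hδ : 0 < δ) {X : Set E2}
    (hX : IsCompact X) (v : E2) :
    Measurable fun t : ℝ => ocAux s δ (X ∩ {x | ⟪v, x⟫ = t}) :=
  (usc_ocAux hs hδ hX v).measurable

lemma meas_content {s : ℝ} (hs : 0 < s) {X : Set E2} (hX : IsCompact X) (v : E2) :
    Measurable fun t : ℝ => hausdorffContent s (X ∩ {x | ⟪v, x⟫ = t}) := by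
  have := meas_ocAux hs (δ := ⊤) (by simp) hX v
  simpa only [ocAux_top_eq_content hs] using this

lemma meas_hausdorff_slice {s : ℝ} (hs : 0 < s) {X : Set E2} (hX : IsCompact X) (v : E2) :
    Measurable fun t : ℝ => μH[s] (X ∩ {x | ⟪v, x⟫ = t}) := by
  have h : ∀ n : ℕ, (0 : ℝ≥0∞) < ((n + 1 : ℕ) : ℝ≥0∞)⁻¹ := by
    intro n
    simp [ENNReal.inv_pos]
  have := Measurable.iSup fun n : ℕ => meas_ocAux hs (h n) hX v
  simpa only [iSup_ocAux_eq_hausdorff hs] using this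

lemma slice_pointwise {s : ℝ} (hs : 0 < s) {B X S : Set E2} (hB : MeasurableSet B)
    (hBX : B ⊆ X)
    (hfg : hausdorffContent s (X ∩ S) = μH[s] (X ∩ S)) (hfin : μH[s] (X ∩ S) < ⊤) :
    hausdorffContent s (B ∩ S) = μH[s] (B ∩ S) := by
  have e1 : (X ∩ S) ∩ B = B ∩ S := by
    ext x
    exact ⟨fun h => ⟨h.2, h.1.2⟩, fun h => ⟨⟨hBX h.1, h.2⟩, h.1⟩⟩
  have e2 : (X ∩ S) \ B = (X \ B) ∩ S := by
    ext x
    exact ⟨fun h => ⟨⟨h.1.1, h.2⟩, h.1.2⟩, fun h => ⟨⟨h.1.1, h.2⟩, h.1.2⟩⟩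
  have hsplit : μH[s] (B ∩ S) + μH[s] ((X \ B) ∩ S) = μH[s] (X ∩ S) := by
    have h := measure_inter_add_diff (μ := μH[s]) (X ∩ S) hB
    rwa [e1, e2] at h
  have hgC : μH[s] ((X \ B) ∩ S) < ⊤ :=
    lt_of_le_of_lt (le_trans le_add_self hsplit.le) hfin
  have hunion : X ∩ S ⊆ (B ∩ S) ∪ ((X \ B) ∩ S) := by
    rintro x ⟨hxX, hxS⟩
    by_cases hxB : x ∈ B
    · exact Or.inl ⟨hxB, hxS⟩
    · exact Or.inr ⟨⟨hxX, hxB⟩, hxS⟩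
  have hchain : μH[s] (B ∩ S) + μH[s] ((X \ B) ∩ S) ≤
      hausdorffContent s (B ∩ S) + μH[s] ((X \ B) ∩ S) := by
    calc μH[s] (B ∩ S) + μH[s] ((X \ B) ∩ S) = μH[s] (X ∩ S) := hsplit
      _ = hausdorffContent s (X ∩ S) := hfg.symm
      _ ≤ hausdorffContent s ((B ∩ S) ∪ ((X \ B) ∩ S)) := content_mono hs hunion
      _ ≤ hausdorffContent s (B ∩ S) + hausdorffContent s ((X \ B) ∩ S) :=
          content_union_le hs _ _
      _ ≤ hausdorffContent s (B ∩ S) + μH[s] ((X \ B) ∩ S) :=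
          add_le_add le_rfl (content_le_hausdorff hs _)
  have hle : μH[s] (B ∩ S) ≤ hausdorffContent s (B ∩ S) :=
    (ENNReal.add_le_add_iff_right hgC.ne).mp hchain
  exact le_antisymm (content_le_hausdorff hs _) hle

theorem stmt4 (X : Set E2) (hX : IsCompact X) (v : E2) (hv : ‖v‖ = 1)
    (s : ℝ) (hs : 0 < s)
    (heq : ∫⁻ t : ℝ, hausdorffContent s (X ∩ {x | ⟪v, x⟫ = t}) ∂volume =
      ∫⁻ t : ℝ, μH[s] (X ∩ {x | ⟪v, x⟫ = t}) ∂volume)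
    (hfin : (∫⁻ t : ℝ, μH[s] (X ∩ {x | ⟪v, x⟫ = t}) ∂volume) < ⊤)
    (B : Set E2) (hB : MeasurableSet B) (hBX : B ⊆ X) :
    (∫⁻ t : ℝ, hausdorffContent s (B ∩ {x | ⟪v, x⟫ = t}) ∂volume =
      ∫⁻ t : ℝ, μH[s] (B ∩ {x | ⟪v, x⟫ = t}) ∂volume) ∧
    ∀ᵐ t : ℝ ∂volume,
      hausdorffContent s (B ∩ {x | ⟪v, x⟫ = t}) = μH[s] (B ∩ {x | ⟪v, x⟫ = t}) := by
  set f : ℝ → ℝ≥0∞ := fun t => hausdorffContent s (X ∩ {x | ⟪v, x⟫ = t}) with hf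
  set g : ℝ → ℝ≥0∞ := fun t => μH[s] (X ∩ {x | ⟪v, x⟫ = t}) with hg
  have hfmeas : Measurable f := meas_content hs hX v
  have hgmeas : Measurable g := meas_hausdorff_slice hs hX v
  have hle : ∀ t, f t ≤ g t := fun t => content_le_hausdorff hs _
  have hfinf : (∫⁻ t, f t ∂volume) ≠ ⊤ := by
    rw [heq]; exact hfin.ne
  have hzero : (∫⁻ t, (g t - f t) ∂volume) = 0 := by
    rw [lintegral_sub hfmeas hfinf (Filter.Eventually.of_forall hle), heq, tsub_self]
  have hae0 : ∀ᵐ t : ℝ ∂volume, g t - f t = 0 :=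
    (lintegral_eq_zero_iff (hgmeas.sub hfmeas)).mp hzero
  have haefin : ∀ᵐ t : ℝ ∂volume, g t < ⊤ := ae_lt_top hgmeas hfin.ne
  have haeB : ∀ᵐ t : ℝ ∂volume,
      hausdorffContent s (B ∩ {x | ⟪v, x⟫ = t}) = μH[s] (B ∩ {x | ⟪v, x⟫ = t}) := by
    filter_upwards [hae0, haefin] with t h0 hlt
    have hfg : f t = g t := le_antisymm (hle t) (tsub_eq_zero_iff_le.mp h0)
    exact slice_pointwise hs hB hBX hfg hlt
  exact ⟨lintegral_congr_ae haeB, haeB⟩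

end
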